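/- For every integer n ≥ 1, if W satisfies the minimal constraints, W·ln W and the powers W^k for 1 ≤ k ≤ n+1 are integrable, and the purity μ of W satisfies ∑_{k=1}^{n} (1 − μ/2)^k / k ≥ 1, then S[W] ≥ 1 + ln π. -/

import Mathlib

open Real MeasureTheory Finset

set_option maxHeartbeats 1000000

/-- For every integer `n ≥ 1`, if `W` satisfies the minimal constraints, `W·ln W` and the
powers `W^k` for `1 ≤ k ≤ n+1` are integrable, and the purity `μ = 2π ∫ W²` satisfies
`∑_{k=1}^{n} (1 − μ/2)^k / k ≥ 1`, then `S[W] ≥ 1 + ln π`. -/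
theorem wigner_conjecture_of_purity_sum (n : ℕ) (hn : 1 ≤ n)
    (W : ℝ × ℝ → ℝ) (hmeas : Measurable W)
    (hpos : ∀ z, 0 ≤ W z)
    (hnorm : ∫ z, W z = 1)
    (hbound : ∀ z, Real.pi * W z ≤ 1)
    (hlog : Integrable (fun z => W z * Real.log (W z)))
    (hpow : ∀ k : ℕ, 1 ≤ k → k ≤ n + 1 → Integrable (fun z => (W z) ^ k))
    (hsum : ∑ k ∈ Finset.Icc 1 n,
        (1 - (2 * Real.pi * ∫ z, (W z) ^ 2) / 2) ^ k / (k : ℝ) ≥ 1) :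
    (-∫ z, W z * Real.log (W z)) ≥ 1 + Real.log Real.pi := by
  have hW1 : Integrable W := by simpa using hpow 1 le_rfl (by omega)
  have hW2 : Integrable (fun z => (W z)^2) := hpow 2 (by omega) (by omega)
  set f : ℝ × ℝ → ℝ := fun z => 1 - Real.pi * W z with hf
  have hf01 : ∀ z, 0 ≤ f z ∧ f z ≤ 1 := by
    intro z
    constructor
    · simp [hf]; exact hbound z
    · simp [hf]
      exact mul_nonneg Real.pi_pos.le (hpos z)
  have hfmeas : Measurable f := measurable_const.sub (hmeas.const_mul _)
  -- the density measure
  set fn : ℝ × ℝ → NNReal := fun z => (W z).toNNReal with hfn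
  have hfnmeas : Measurable fn := hmeas.real_toNNReal
  set μm : Measure (ℝ × ℝ) := volume.withDensity (fun z => (fn z : ENNReal)) with hμm
  have hconv : ∀ (g : ℝ × ℝ → ℝ), ∫ z, g z ∂μm = ∫ z, W z * g z := by
    intro g
    rw [hμm, integral_withDensity_eq_integral_smul hfnmeas]
    congr 1
    funext z
    simp [hfn, NNReal.smul_def, Real.coe_toNNReal _ (hpos z)]
  have hprob : IsProbabilityMeasure μm := by
    constructor
    rw [hμm, withDensity_apply _ MeasurableSet.univ, Measure.restrict_univ]
    have : ∀ z, (fn z : ENNReal) = ENNReal.ofReal (W z) := by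
      intro z; simp [hfn, ENNReal.ofReal]
    simp only [this]
    rw [← ofReal_integral_eq_lintegral_ofReal hW1 (Filter.Eventually.of_forall hpos), hnorm]
    simp
  -- value of ∫ W f
  have hIf : ∫ z, W z * f z = 1 - Real.pi * ∫ z, (W z)^2 := by
    have he : (fun z => W z * f z) = fun z => W z - Real.pi * (W z)^2 := by
      funext z; simp only [hf]; ring
    rw [he, integral_sub hW1 (hW2.const_mul _), hnorm, integral_const_mul]
  -- boundedness/integrability over μm
  have hbdd : ∀ k : ℕ, Integrable (fun z => (f z)^k) μm := by
    intro k
    refine Integrable.mono' (integrable_const 1) ((hfmeas.pow_const k).aestronglyMeasurable) ?_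
    refine Filter.Eventually.of_forall fun z => ?_
    rw [Real.norm_eq_abs, abs_of_nonneg (pow_nonneg (hf01 z).1 k)]
    exact pow_le_one₀ (hf01 z).1 (hf01 z).2
  -- Jensen's inequality
  have hjensen : ∀ k : ℕ, (∫ z, W z * f z) ^ k ≤ ∫ z, W z * (f z)^k := by
    intro k
    have h := (convexOn_pow k).map_integral_le (μ := μm) (f := f)
      ((continuous_pow k).continuousOn) isClosed_Ici
      (Filter.Eventually.of_forall fun z => (hf01 z).1) (by simpa using hbdd 1)
      (by exact hbdd k)
    rw [hconv f, hconv (fun z => (f z)^k)] at h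
    exact h
  -- pointwise truncated series bound
  have hpt : ∀ z, ∑ k ∈ Finset.Icc 1 n, W z * ((f z)^k / k)
      ≤ W z * (-Real.log (Real.pi * W z)) := by
    intro z
    rcases eq_or_lt_of_le (hpos z) with h0 | h0
    · simp [← h0]
    · have hx : |f z| < 1 := by
        rw [abs_of_nonneg (hf01 z).1]
        have : 0 < Real.pi * W z := mul_pos Real.pi_pos h0
        simp only [hf]; linarith
      have hs := Real.hasSum_pow_div_log_of_abs_lt_one hx
      have h1 : 1 - f z = Real.pi * W z := by simp [hf]
      rw [h1] at hs
      have hle : ∑ k ∈ Finset.Icc 1 n, (f z)^k / k ≤ -Real.log (Real.pi * W z) := by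
        have hnn : ∀ i ∉ Finset.range n,
            0 ≤ (f z) ^ (i + 1) / ((i : ℝ) + 1) := by
          intro i _
          have h2 : 0 ≤ f z := (hf01 z).1
          positivity
        have hsl := sum_le_hasSum (Finset.range n) hnn hs
        refine le_trans (le_of_eq ?_) hsl
        rw [← Finset.Ico_add_one_right_eq_Icc, Finset.sum_Ico_eq_sum_range]
        simp [add_comm]
      calc ∑ k ∈ Finset.Icc 1 n, W z * ((f z)^k / k)
          = W z * ∑ k ∈ Finset.Icc 1 n, (f z)^k / k := by rw [Finset.mul_sum]
        _ ≤ _ := mul_le_mul_of_nonneg_left hle (hpos z)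
  -- integrability of the truncated terms (w.r.t. volume)
  have hterm : ∀ k ∈ Finset.Icc 1 n, Integrable (fun z => W z * ((f z)^k / k)) := by
    intro k hk
    refine hW1.mono ((hmeas.mul ((hfmeas.pow_const k).div_const _)).aestronglyMeasurable) ?_
    refine Filter.Eventually.of_forall fun z => ?_
    have hk1 : (1:ℝ) ≤ (k:ℝ) := by exact_mod_cast (Finset.mem_Icc.mp hk).1
    have hpk : 0 ≤ (f z)^k := pow_nonneg (hf01 z).1 k
    have hd1 : (f z)^k / k ≤ 1 := by
      have h1 : (f z)^k ≤ 1 := pow_le_one₀ (hf01 z).1 (hf01 z).2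
      have h2 : (f z)^k / k ≤ (f z)^k := div_le_self hpk hk1
      linarith
    have hd0 : 0 ≤ (f z)^k / k := div_nonneg hpk (by positivity)
    rw [Real.norm_eq_abs, Real.norm_eq_abs, abs_of_nonneg (hpos z),
      abs_of_nonneg (mul_nonneg (hpos z) hd0)]
    nlinarith [hpos z]
  -- rewriting the entropy integrand
  have heq : (fun z => W z * (-Real.log (Real.pi * W z)))
      = fun z => (-Real.log Real.pi) * W z - W z * Real.log (W z) := by
    funext z
    rcases eq_or_lt_of_le (hpos z) with h0 | h0
    · simp [← h0]
    · rw [Real.log_mul Real.pi_ne_zero (ne_of_gt h0)]; ring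
  have hRint : Integrable (fun z => W z * (-Real.log (Real.pi * W z))) := by
    rw [heq]; exact (hW1.const_mul _).sub hlog
  -- main chain
  have hbase : 1 - (2 * Real.pi * ∫ z, (W z) ^ 2) / 2 = ∫ z, W z * f z := by
    rw [hIf]; ring
  have main : (1:ℝ) ≤ ∫ z, W z * (-Real.log (Real.pi * W z)) := by
    calc (1:ℝ) ≤ ∑ k ∈ Finset.Icc 1 n,
          (1 - (2 * Real.pi * ∫ z, (W z) ^ 2) / 2) ^ k / (k : ℝ) := hsum
      _ = ∑ k ∈ Finset.Icc 1 n, (∫ z, W z * f z) ^ k / (k : ℝ) := by rw [hbase]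
      _ ≤ ∑ k ∈ Finset.Icc 1 n, (∫ z, W z * (f z)^k) / (k : ℝ) := by
          apply Finset.sum_le_sum
          intro k hk
          have := hjensen k
          gcongr
      _ = ∑ k ∈ Finset.Icc 1 n, ∫ z, W z * ((f z)^k / k) := by
          refine Finset.sum_congr rfl fun k hk => ?_
          rw [← integral_div]
          congr 1; funext z; ring
      _ = ∫ z, ∑ k ∈ Finset.Icc 1 n, W z * ((f z)^k / k) :=
          (integral_finset_sum _ hterm).symm
      _ ≤ ∫ z, W z * (-Real.log (Real.pi * W z)) :=
          integral_mono (integrable_finset_sum _ hterm) hRint hpt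
  have hval : ∫ z, W z * (-Real.log (Real.pi * W z))
      = -Real.log Real.pi - ∫ z, W z * Real.log (W z) := by
    rw [heq, integral_sub (hW1.const_mul _) hlog, integral_const_mul, hnorm, mul_one]
  rw [hval] at main
  linarith
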